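/- Under the standing hypotheses (a continuous; b, c continuous nonnegative; τ > 0; b_j < 1; t_j ↑ ∞; l = min{τ,1}), if liminf_{t→∞} ∫_{t−l}^{t} (∏_{s−τ < t_j ≤ s}(1−b_j))·b(s)·exp(∫_{s−τ}^{s} a(u) du) ds > 1/e, then every solution of x'(t) + a(t)x(t) + b(t)x(t−τ) + c(t)x([t−1]) = 0 (t ≠ t_i), Δx(t_i) = b_i x(t_i), is oscillatory. -/

import Mathlib

open Set Filter Topology intervalIntegral

section PRELIM

lemma mcl_base {f : ℝ → ℝ} {u v : ℝ} (huv : u ≤ v)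
    (hcont : ContinuousOn f (Icc u v))
    (hd : ∀ t ∈ Ioo u v, ∃ d, HasDerivAt f d t ∧ d ≤ 0) :
    f v ≤ f u := by
  have h := antitoneOn_of_deriv_nonpos (convex_Icc u v) hcont
    (fun t ht => by
      rw [interior_Icc] at ht
      obtain ⟨d, hdd, _⟩ := hd t ht
      exact hdd.differentiableAt.differentiableWithinAt)
    (fun t ht => by
      rw [interior_Icc] at ht
      obtain ⟨d, hdd, hd0⟩ := hd t ht
      rw [hdd.deriv]; exact hd0)
  exact h (left_mem_Icc.2 huv) (right_mem_Icc.2 huv) huv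

lemma mcl_aux (n : ℕ) : ∀ (S : Set ℝ) (f : ℝ → ℝ) (u v : ℝ), u ≤ v →
    ∀ (hfin : (S ∩ Ioo u v).Finite), hfin.toFinset.card ≤ n →
    ContinuousOn f (Icc u v) →
    (∀ t ∈ Ioo u v, t ∉ S → ∃ d, HasDerivAt f d t ∧ d ≤ 0) →
    f v ≤ f u := by
  induction n with
  | zero =>
    intro S f u v huv hfin hcard hcont hd
    apply mcl_base huv hcont
    intro t ht
    refine hd t ht fun htS => ?_
    have h1 : t ∈ hfin.toFinset := by rw [hfin.mem_toFinset]; exact ⟨htS, ht⟩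
    rw [Finset.card_eq_zero.1 (Nat.le_zero.1 hcard)] at h1
    exact absurd h1 (Finset.notMem_empty t)
  | succ n ih =>
    intro S f u v huv hfin hcard hcont hd
    rcases Set.eq_empty_or_nonempty (S ∩ Ioo u v) with hS | ⟨w, hwS, hw⟩
    · apply mcl_base huv hcont
      intro t ht
      refine hd t ht fun htS => ?_
      exact absurd (show t ∈ S ∩ Ioo u v from ⟨htS, ht⟩) (hS ▸ notMem_empty t)
    · have hwmem : w ∈ hfin.toFinset := by rw [hfin.mem_toFinset]; exact ⟨hwS, hw⟩
      have key : ∀ u' v' : ℝ, u ≤ u' → v' ≤ v → ¬ (w ∈ Ioo u' v') → u' ≤ v' →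
          f v' ≤ f u' := by
        intro u' v' hu' hv' hwmem' huv'
        have hsub : S ∩ Ioo u' v' ⊆ (S ∩ Ioo u v) \ {w} := by
          rintro t ⟨htS, ht⟩
          refine ⟨⟨htS, Ioo_subset_Ioo hu' hv' ht⟩, ?_⟩
          simp only [mem_singleton_iff]
          rintro rfl; exact hwmem' ht
        have hfin' : (S ∩ Ioo u' v').Finite := hfin.subset (hsub.trans diff_subset)
        refine ih S f u' v' huv' hfin' ?_ (hcont.mono (Icc_subset_Icc hu' hv')) ?_
        · have : hfin'.toFinset ⊆ hfin.toFinset.erase w := by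
            intro t htf
            rw [hfin'.mem_toFinset] at htf
            obtain ⟨h1, h2⟩ := hsub htf
            exact Finset.mem_erase.2 ⟨h2, hfin.mem_toFinset.2 h1⟩
          calc hfin'.toFinset.card ≤ (hfin.toFinset.erase w).card := Finset.card_le_card this
            _ = hfin.toFinset.card - 1 := Finset.card_erase_of_mem hwmem
            _ ≤ n := by omega
        · intro t ht htS
          exact hd t (Ioo_subset_Ioo hu' hv' ht) htS
      calc f v ≤ f w := key w v hw.1.le le_rfl (fun h => lt_irrefl w h.1) hw.2.le
        _ ≤ f u := key u w le_rfl hw.2.le (fun h => lt_irrefl w h.2) hw.1.le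

lemma mcl {S : Set ℝ} {f : ℝ → ℝ} {u v : ℝ} (huv : u ≤ v)
    (hfin : (S ∩ Ioo u v).Finite)
    (hcont : ContinuousOn f (Icc u v))
    (hd : ∀ t ∈ Ioo u v, t ∉ S → ∃ d, HasDerivAt f d t ∧ d ≤ 0) :
    f v ≤ f u :=
  mcl_aux hfin.toFinset.card S f u v huv hfin le_rfl hcont hd


noncomputable def impCount (ti : ℕ → ℝ) (t : ℝ) : ℕ := sInf {n | t < ti n}

lemma impCount_spec {ti : ℕ → ℝ} (hti : StrictMono ti)
    (htiTop : Tendsto ti atTop atTop) (t : ℝ) (j : ℕ) :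
    ti j ≤ t ↔ j < impCount ti t := by
  have hne : {n | t < ti n}.Nonempty := by
    obtain ⟨n, hn⟩ := (htiTop.eventually_gt_atTop t).exists
    exact ⟨n, hn⟩
  constructor
  · intro h
    by_contra hc
    push_neg at hc
    have := hti.monotone (show impCount ti t ≤ j from hc)
    have h2 : t < ti (impCount ti t) := Nat.sInf_mem hne
    linarith
  · intro h
    have : j ∉ {n | t < ti n} := Nat.notMem_of_lt_sInf h
    simpa using not_lt.1 this

lemma impCount_eq_of_iff {ti : ℕ → ℝ} (hti : StrictMono ti)
    (htiTop : Tendsto ti atTop atTop) {s : ℝ} {m : ℕ}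
    (h : ∀ j, ti j ≤ s ↔ j < m) : impCount ti s = m := by
  have h2 : ∀ j, j < impCount ti s ↔ j < m := by
    intro j; rw [← impCount_spec hti htiTop, h]
  by_contra hc
  rcases Nat.lt_or_ge (impCount ti s) m with h3 | h3
  · exact absurd ((h2 _).2 h3) (lt_irrefl _)
  · have : m < impCount ti s := lt_of_le_of_ne h3 (Ne.symm hc)
    exact absurd ((h2 _).1 this) (lt_irrefl _)

lemma impCount_mono {ti : ℕ → ℝ} (hti : StrictMono ti)
    (htiTop : Tendsto ti atTop atTop) : Monotone (impCount ti) := by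
  intro s t hst
  by_contra hc
  push_neg at hc
  have h1 : ti (impCount ti t) ≤ s := (impCount_spec hti htiTop s _).2 hc
  have h2 : ¬ ti (impCount ti t) ≤ t := by
    rw [impCount_spec hti htiTop]; exact lt_irrefl _
  exact h2 (h1.trans hst)

lemma impCount_ti {ti : ℕ → ℝ} (hti : StrictMono ti)
    (htiTop : Tendsto ti atTop atTop) (i : ℕ) : impCount ti (ti i) = i + 1 :=
  impCount_eq_of_iff hti htiTop fun j => by
    rw [hti.le_iff_le]; omega

/-- `impCount` is locally constant at non-impulse points. -/
lemma impCount_locally_const {ti : ℕ → ℝ} (hti : StrictMono ti)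
    (htiTop : Tendsto ti atTop atTop) {t : ℝ} (h : ∀ j, ti j ≠ t) :
    ∃ lo hi : ℝ, lo < t ∧ t < hi ∧ ∀ s, lo < s → s < hi → impCount ti s = impCount ti t := by
  rcases Nat.eq_zero_or_eq_succ_pred (impCount ti t) with h0 | hsucc
  · refine ⟨t - 1, ti 0, by linarith, ?_, ?_⟩
    · have : ¬ ti 0 ≤ t := by rw [impCount_spec hti htiTop, h0]; omega
      linarith [not_le.1 this]
    · intro s _ hs
      rw [h0]
      refine impCount_eq_of_iff hti htiTop fun j => ?_
      simp only [Nat.not_lt_zero, iff_false, not_le]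
      exact lt_of_lt_of_le hs (hti.monotone (Nat.zero_le j))
  · set i := (impCount ti t) - 1 with hi_def
    have hN : impCount ti t = i + 1 := hsucc
    have h1 : ti i < t := by
      have : ti i ≤ t := (impCount_spec hti htiTop t i).2 (by omega)
      exact lt_of_le_of_ne this (h i)
    have h2 : t < ti (i + 1) := by
      have : ¬ ti (i+1) ≤ t := by rw [impCount_spec hti htiTop]; omega
      exact not_le.1 this
    refine ⟨ti i, ti (i+1), h1, h2, fun s hs1 hs2 => ?_⟩
    rw [hN]
    refine impCount_eq_of_iff hti htiTop fun j => ?_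
    constructor
    · intro hj
      by_contra hc
      have : ti (i+1) ≤ ti j := hti.monotone (by omega)
      linarith
    · intro hj
      have : ti j ≤ ti i := hti.monotone (by omega)
      linarith

/-- `impCount` equals `i` just to the left of `ti i`. -/
lemma impCount_left {ti : ℕ → ℝ} (hti : StrictMono ti)
    (htiTop : Tendsto ti atTop atTop) (i : ℕ) :
    ∃ lo : ℝ, lo < ti i ∧ ∀ s, lo < s → s < ti i → impCount ti s = i := by
  rcases Nat.eq_zero_or_pos i with rfl | hpos
  · refine ⟨ti 0 - 1, by linarith, fun s _ hs => ?_⟩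
    refine impCount_eq_of_iff hti htiTop fun j => ?_
    simp only [Nat.not_lt_zero, iff_false, not_le]
    exact lt_of_lt_of_le hs (hti.monotone (Nat.zero_le j))
  · refine ⟨ti (i-1), hti (by omega), fun s hs1 hs2 => ?_⟩
    refine impCount_eq_of_iff hti htiTop fun j => ?_
    constructor
    · intro hj
      by_contra hc
      exact absurd (le_trans (hti.monotone (by omega : i ≤ j)) hj) (not_le.2 hs2)
    · intro hj
      exact le_trans (hti.monotone (by omega : j ≤ i - 1)) hs1.le

/-- `impCount` equals `i+1` just to the right of `ti i` (including at `ti i`). -/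
lemma impCount_right {ti : ℕ → ℝ} (hti : StrictMono ti)
    (htiTop : Tendsto ti atTop atTop) (i : ℕ) :
    ∀ s, ti i ≤ s → s < ti (i+1) → impCount ti s = i + 1 := by
  intro s hs1 hs2
  refine impCount_eq_of_iff hti htiTop fun j => ?_
  constructor
  · intro hj
    by_contra hc
    exact absurd (le_trans (hti.monotone (by omega : i + 1 ≤ j)) hj) (not_le.2 hs2)
  · intro hj
    exact le_trans (hti.monotone (by omega : j ≤ i)) hs1

noncomputable def piProd (ti bi : ℕ → ℝ) (t : ℝ) : ℝ :=
  ∏ j ∈ Finset.range (impCount ti t), (1 - bi j)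

section PIPROD
variable {ti bi : ℕ → ℝ} (hti : StrictMono ti) (htiTop : Tendsto ti atTop atTop)

include hti htiTop in
lemma finprod_eq_Ico_prod (bi : ℕ → ℝ) (τ : ℝ) (s : ℝ) :
    (∏ᶠ j ∈ {j : ℕ | s - τ < ti j ∧ ti j ≤ s}, (1 - bi j)) =
      ∏ j ∈ Finset.Ico (impCount ti (s - τ)) (impCount ti s), (1 - bi j) := by
  have hset : {j : ℕ | s - τ < ti j ∧ ti j ≤ s} =
      ↑(Finset.Ico (impCount ti (s - τ)) (impCount ti s)) := by
    ext j
    simp only [mem_setOf_eq, Finset.coe_Ico, mem_Ico]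
    constructor
    · rintro ⟨h1, h2⟩
      refine ⟨?_, (impCount_spec hti htiTop _ _).1 h2⟩
      by_contra hc
      push_neg at hc
      exact absurd ((impCount_spec hti htiTop _ _).2 hc) (not_le.2 h1)
    · rintro ⟨h1, h2⟩
      refine ⟨?_, (impCount_spec hti htiTop _ _).2 h2⟩
      by_contra hc
      push_neg at hc
      have := (impCount_spec hti htiTop (s - τ) j).1 hc
      omega
  rw [hset, finprod_mem_coe_finset]

lemma piProd_pos (hbi : ∀ i, bi i < 1) (t : ℝ) : 0 < piProd ti bi t :=
  Finset.prod_pos fun j _ => by linarith [hbi j]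

include hti htiTop in
lemma piProd_split (bi : ℕ → ℝ) (τ : ℝ) (hτ : 0 < τ) (s : ℝ) :
    piProd ti bi s = piProd ti bi (s - τ) *
      ∏ j ∈ Finset.Ico (impCount ti (s - τ)) (impCount ti s), (1 - bi j) := by
  unfold piProd
  rw [Finset.prod_range_mul_prod_Ico _
    (impCount_mono hti htiTop (by linarith : s - τ ≤ s))]

include hti htiTop in
lemma impCount_measurable : Measurable (impCount ti) := by
  apply measurable_to_countable'
  intro n
  apply Set.OrdConnected.measurableSet
  constructor
  intro s hs t ht u hu
  simp only [mem_preimage, mem_singleton_iff] at *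
  have h1 := impCount_mono hti htiTop hu.1
  have h2 := impCount_mono hti htiTop hu.2
  omega

include hti htiTop in
lemma piProd_measurable (bi : ℕ → ℝ) : Measurable (piProd ti bi) := by
  have : piProd ti bi = (fun n => ∏ j ∈ Finset.range n, (1 - bi j)) ∘ impCount ti :=
    rfl
  rw [this]
  exact measurable_from_top.comp (impCount_measurable hti htiTop)
end PIPROD

end PRELIM

section MAIN
set_option maxHeartbeats 2000000 in
lemma no_eventually_pos
    (a b c : ℝ → ℝ) (ha : Continuous a) (hb : Continuous b) (hc : Continuous c)
    (hbnn : ∀ t, 0 ≤ b t) (hcnn : ∀ t, 0 ≤ c t)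
    (τ : ℝ) (hτ : 0 < τ)
    (bi : ℕ → ℝ) (hbi : ∀ i, bi i < 1)
    (ti : ℕ → ℝ) (hti : StrictMono ti) (hti0 : 0 < ti 0)
    (htiTop : Tendsto ti atTop atTop)
    (hcrit : 1 / Real.exp 1 < Filter.liminf (fun t => ∫ s in (t - min τ 1)..t,
      (∏ᶠ j ∈ {j : ℕ | s - τ < ti j ∧ ti j ≤ s}, (1 - bi j)) * b s *
        Real.exp (∫ u in (s - τ)..s, a u)) Filter.atTop)
    (x : ℝ → ℝ)
    (hsol : ∀ t, 0 < t → (∀ i, t ≠ ti i) →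
      HasDerivAt x (-(a t * x t + b t * x (t - τ) + c t * x ((⌊t - 1⌋ : ℤ) : ℝ))) t)
    (hrc : ∀ i, ContinuousWithinAt x (Set.Ici (ti i)) (ti i))
    (himp : ∀ i, Tendsto x (nhdsWithin (ti i) (Set.Iio (ti i)))
      (nhds ((1 - bi i) * x (ti i))))
    (T : ℝ) (hpos : ∀ t, T < t → 0 < x t) : False := by
  -- notation
  set l := min τ 1 with hl_def
  have hl0 : 0 < l := lt_min hτ one_pos
  have hlτ : l ≤ τ := min_le_left _ _
  set N := impCount ti with hN_def
  set Pi := piProd ti bi with hPi_def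
  set A : ℝ → ℝ := fun t => ∫ u in (0:ℝ)..t, a u with hA_def
  set z : ℝ → ℝ := fun t => x t * Pi t * Real.exp (A t) with hz_def
  set P : ℝ → ℝ := fun s => (∏ᶠ j ∈ {j : ℕ | s - τ < ti j ∧ ti j ≤ s}, (1 - bi j)) * b s *
        Real.exp (∫ u in (s - τ)..s, a u) with hP_def
  set D : Set ℝ := Set.range ti ∪ Set.range (fun j => ti j + τ) with hD_def
  -- basic facts
  have hA' : ∀ t, HasDerivAt A (a t) t := fun t => (ha.integral_hasStrictDerivAt 0 t).hasDerivAt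
  have hAcont : Continuous A := continuous_iff_continuousAt.2 fun t => (hA' t).continuousAt
  have hAint : ∀ s : ℝ, (∫ u in (s - τ)..s, a u) = A s - A (s - τ) := fun s =>
    (integral_interval_sub_left (ha.intervalIntegrable 0 s) (ha.intervalIntegrable 0 (s - τ))).symm
  have hPi_pos : ∀ t, 0 < Pi t := piProd_pos hbi
  have hPeq : ∀ s, P s = (Pi s / Pi (s - τ)) * b s * Real.exp (A s - A (s - τ)) := by
    intro s
    have hppos := piProd_pos (ti := ti) hbi (s - τ)
    have h2 := piProd_split hti htiTop bi τ hτ s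
    have h3 : (∏ j ∈ Finset.Ico (impCount ti (s - τ)) (impCount ti s), (1 - bi j))
        = piProd ti bi s / piProd ti bi (s - τ) := by
      rw [eq_div_iff hppos.ne']
      rw [h2]; ring
    simp only [hP_def, hPi_def]
    rw [finprod_eq_Ico_prod hti htiTop bi τ s, h3, hAint s]
  have hPnn : ∀ s, 0 ≤ P s := by
    intro s
    rw [hPeq s]
    exact mul_nonneg (mul_nonneg (div_nonneg (hPi_pos s).le (hPi_pos (s - τ)).le) (hbnn s))
      (Real.exp_pos _).le
  have hPmeas : Measurable P := by
    have hfe : P = fun s => (Pi s / Pi (s - τ)) * b s * Real.exp (A s - A (s - τ)) :=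
      funext hPeq
    rw [hfe]
    refine Measurable.mul (Measurable.mul ?_ hb.measurable) ?_
    · exact (piProd_measurable hti htiTop bi).div
        ((piProd_measurable hti htiTop bi).comp (measurable_id.sub measurable_const))
    · exact (Real.continuous_exp.comp
        (hAcont.sub (hAcont.comp (continuous_id.sub continuous_const)))).measurable
  have hPint : ∀ u v : ℝ, IntervalIntegrable P MeasureTheory.volume u v := by
    have key : ∀ u v : ℝ, u ≤ v → IntervalIntegrable P MeasureTheory.volume u v := by
      intro u v huv
      set K := impCount ti v with hK_def
      set C1 : ℝ := ∏ j ∈ Finset.range K, max 1 |1 - bi j| with hC1_def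
      have hC1nn : 0 ≤ C1 := Finset.prod_nonneg fun j _ => le_trans zero_le_one (le_max_left _ _)
      have hC1bd : ∀ n, n ≤ K → |∏ j ∈ Finset.range n, (1 - bi j)| ≤ C1 := by
        intro n hn
        rw [Finset.abs_prod]
        calc (∏ j ∈ Finset.range n, |1 - bi j|)
            ≤ ∏ j ∈ Finset.range n, max 1 |1 - bi j| :=
              Finset.prod_le_prod (fun j _ => abs_nonneg _) (fun j _ => le_max_right _ _)
          _ ≤ C1 := by
              rw [hC1_def, ← Finset.prod_range_mul_prod_Ico _ hn]
              have h1le : (1:ℝ) ≤ ∏ j ∈ Finset.Ico n K, max 1 |1 - bi j| := by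
                have := Finset.prod_le_prod (s := Finset.Ico n K)
                  (f := fun _ => (1:ℝ)) (g := fun j => max 1 |1 - bi j|)
                  (fun j _ => zero_le_one) (fun j _ => le_max_left _ _)
                simpa using this
              have hnn : 0 ≤ ∏ j ∈ Finset.range n, max 1 |1 - bi j| :=
                Finset.prod_nonneg fun j _ => le_trans zero_le_one (le_max_left _ _)
              exact le_mul_of_one_le_right hnn h1le
      set Q : Finset ℝ := (Finset.range (K + 1)).image
        (fun n => ∏ j ∈ Finset.range n, (1 - bi j)) with hQ_def
      have hQne : Q.Nonempty := ⟨∏ j ∈ Finset.range 0, (1 - bi j),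
        Finset.mem_image.2 ⟨0, Finset.mem_range.2 (Nat.succ_pos K), rfl⟩⟩
      set C2 : ℝ := Q.min' hQne with hC2_def
      have hC2pos : 0 < C2 := by
        obtain ⟨n, _, hn2⟩ := Finset.mem_image.1 (Q.min'_mem hQne)
        rw [hC2_def, ← hn2]
        exact Finset.prod_pos fun j _ => by linarith [hbi j]
      have hC2bd : ∀ n, n ≤ K → C2 ≤ ∏ j ∈ Finset.range n, (1 - bi j) := fun n hn =>
        Q.min'_le _ (Finset.mem_image.2 ⟨n, Finset.mem_range.2 (by omega), rfl⟩)
      have hgint : IntervalIntegrable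
          (fun s => (C1 / C2) * (b s * Real.exp (A s - A (s - τ))))
          MeasureTheory.volume u v :=
        (continuous_const.mul (hb.mul (Real.continuous_exp.comp
          (hAcont.sub (hAcont.comp
            (continuous_id.sub continuous_const)))))).intervalIntegrable u v
      refine hgint.mono_fun' (hPmeas.aestronglyMeasurable.restrict) ?_
      have hss : Set.uIoc u v = Set.Ioc u v := Set.uIoc_of_le huv
      refine ((MeasureTheory.ae_restrict_mem measurableSet_uIoc).mono ?_)
      intro s hs
      show ‖P s‖ ≤ (C1 / C2) * (b s * Real.exp (A s - A (s - τ)))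
      rw [hss] at hs
      have hsv : s ≤ v := hs.2
      have hNs : impCount ti s ≤ K := impCount_mono hti htiTop hsv
      have hNsτ : impCount ti (s - τ) ≤ K := impCount_mono hti htiTop (by linarith)
      have hb1 : Pi s ≤ C1 := by
        simp only [hPi_def, piProd]
        exact le_trans (le_abs_self _) (hC1bd _ hNs)
      have hb2 : C2 ≤ Pi (s - τ) := by
        simp only [hPi_def, piProd]
        exact hC2bd _ hNsτ
      have hdivle : Pi s / Pi (s - τ) ≤ C1 / C2 :=
        div_le_div₀ hC1nn hb1 hC2pos hb2
      have hnn := hPnn s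
      rw [Real.norm_eq_abs, abs_of_nonneg hnn, hPeq s]
      have hbe : 0 ≤ b s * Real.exp (A s - A (s - τ)) :=
        mul_nonneg (hbnn s) (Real.exp_pos _).le
      calc Pi s / Pi (s - τ) * b s * Real.exp (A s - A (s - τ))
          = (Pi s / Pi (s - τ)) * (b s * Real.exp (A s - A (s - τ))) := by ring
        _ ≤ (C1 / C2) * (b s * Real.exp (A s - A (s - τ))) :=
            mul_le_mul_of_nonneg_right hdivle hbe
    intro u v
    rcases le_total u v with h | h
    · exact key u v h
    · exact (key v u h).symm
  have hPprim_cont : ∀ w : ℝ, Continuous (fun t => ∫ s in w..t, P s) := fun w =>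
    intervalIntegral.continuous_primitive (fun u v => hPint u v) w
  have hPcontAt : ∀ t : ℝ, t ∉ D → ContinuousAt P t := by
    intro t htD
    have h1 : ∀ j, ti j ≠ t := fun j he => htD (Or.inl ⟨j, he⟩)
    have h2 : ∀ j, ti j ≠ t - τ := fun j he => htD (Or.inr ⟨j, show ti j + τ = t by rw [he]; ring⟩)
    obtain ⟨lo1, hi1, hlo1, hhi1, hc1⟩ := impCount_locally_const hti htiTop h1
    obtain ⟨lo2, hi2, hlo2, hhi2, hc2⟩ := impCount_locally_const hti htiTop h2
    have hPE : ∀ᶠ s in 𝓝 t,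
        (fun s => (Pi t / Pi (t - τ)) * b s * Real.exp (A s - A (s - τ))) s = P s := by
      have hmem : Ioo (max lo1 (lo2 + τ)) (min hi1 (hi2 + τ)) ∈ 𝓝 t :=
        Ioo_mem_nhds (max_lt hlo1 (by linarith)) (lt_min hhi1 (by linarith))
      filter_upwards [hmem] with s hs
      have hs1 := lt_of_le_of_lt (le_max_left lo1 (lo2 + τ)) hs.1
      have hs2 := lt_of_lt_of_le hs.2 (min_le_left hi1 (hi2 + τ))
      have hs3 := lt_of_le_of_lt (le_max_right lo1 (lo2 + τ)) hs.1
      have hs4 := lt_of_lt_of_le hs.2 (min_le_right hi1 (hi2 + τ))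
      have e1 : impCount ti s = impCount ti t := hc1 s hs1 hs2
      have e2 : impCount ti (s - τ) = impCount ti (t - τ) :=
        hc2 (s - τ) (by linarith) (by linarith)
      rw [hPeq s]
      simp only [hPi_def, piProd]
      rw [e1, e2]
    exact (continuousAt_congr hPE).1 ((continuous_const.mul hb).continuousAt.mul
      (Real.continuous_exp.comp
        (hAcont.sub (hAcont.comp (continuous_id.sub continuous_const)))).continuousAt)
  have hPderiv : ∀ w t : ℝ, t ∉ D → HasDerivAt (fun r => ∫ s in w..r, P s) (P t) t := fun w t ht =>
    intervalIntegral.integral_hasDerivAt_right (hPint w t)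
      hPmeas.aestronglyMeasurable.stronglyMeasurableAtFilter (hPcontAt t ht)
  have hfinD : ∀ u v : ℝ, (D ∩ Ioo u v).Finite := by
    have h1 : ∀ g : ℕ → ℝ, Tendsto g atTop atTop → ∀ u v : ℝ, (Set.range g ∩ Ioo u v).Finite := by
      intro g hg u v
      obtain ⟨M, hM⟩ := eventually_atTop.1 (hg.eventually_gt_atTop v)
      refine ((finite_Iio M).image g).subset ?_
      rintro y ⟨⟨j, rfl⟩, hy⟩
      refine ⟨j, ?_, rfl⟩
      by_contra hc
      exact absurd hy.2 (not_lt.2 (hM j (not_lt.1 hc)).le)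
    intro u v
    rw [hD_def, Set.union_inter_distrib_right]
    exact (h1 ti htiTop u v).union
      (h1 _ (tendsto_atTop_add_const_right atTop τ htiTop) u v)
  -- thresholds
  set T₀ := max T 0 with hT₀_def
  have hx : ∀ t, T₀ < t → 0 < x t := fun t ht => hpos t (lt_of_le_of_lt (le_max_left _ _) ht)
  have hzpos : ∀ t, T₀ < t → 0 < z t := fun t ht =>
    mul_pos (mul_pos (hx t ht) (hPi_pos t)) (Real.exp_pos _)
  set S := T₀ + τ + 2 with hS_def
  have hS_pos : 0 < S := by positivity
  -- z is continuous on (0,∞)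
  have hzcont : ∀ t : ℝ, 0 < t → ContinuousAt z t := by
    intro t ht
    by_cases hcase : ∃ i, t = ti i
    · obtain ⟨i, rfl⟩ := hcase
      have hNi : impCount ti (ti i) = i + 1 := impCount_ti hti htiTop i
      obtain ⟨lo, hlo, hNleft⟩ := impCount_left hti htiTop i
      have hzR : Tendsto z (𝓝[≥] ti i) (𝓝 (z (ti i))) := by
        have hEq : ∀ᶠ s in 𝓝[≥] ti i,
            x s * Pi (ti i) * Real.exp (A s) = z s := by
          have hmem : Ico (ti i) (ti (i + 1)) ∈ 𝓝[≥] ti i :=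
            Ico_mem_nhdsGE (hti (Nat.lt_succ_self i))
          filter_upwards [hmem] with s hs
          have := impCount_right hti htiTop i s hs.1 hs.2
          simp only [hz_def, hPi_def, piProd]
          rw [this, hNi]
        have h1 : Tendsto (fun s => x s * Pi (ti i) * Real.exp (A s)) (𝓝[≥] ti i)
            (𝓝 (x (ti i) * Pi (ti i) * Real.exp (A (ti i)))) :=
          ((hrc i).mul_const _).mul
            (((Real.continuous_exp.comp hAcont).tendsto (ti i)).mono_left nhdsWithin_le_nhds)
        exact h1.congr' hEq
      have hzL : Tendsto z (𝓝[<] ti i) (𝓝 (z (ti i))) := by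
        have hEq : ∀ᶠ s in 𝓝[<] ti i,
            x s * (∏ j ∈ Finset.range i, (1 - bi j)) * Real.exp (A s) = z s := by
          have hmem : Ioo lo (ti i) ∈ 𝓝[<] ti i :=
            Ioo_mem_nhdsLT_of_mem ⟨hlo, le_rfl⟩
          filter_upwards [hmem] with s hs
          have := hNleft s hs.1 hs.2
          simp only [hz_def, hPi_def, piProd]
          rw [this]
        have h1 : Tendsto (fun s => x s * (∏ j ∈ Finset.range i, (1 - bi j)) * Real.exp (A s))
            (𝓝[<] ti i)
            (𝓝 ((1 - bi i) * x (ti i) * (∏ j ∈ Finset.range i, (1 - bi j))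
              * Real.exp (A (ti i)))) :=
          ((himp i).mul_const _).mul
            (((Real.continuous_exp.comp hAcont).tendsto (ti i)).mono_left nhdsWithin_le_nhds)
        have h2 : (1 - bi i) * x (ti i) * (∏ j ∈ Finset.range i, (1 - bi j))
            * Real.exp (A (ti i)) = z (ti i) := by
          simp only [hz_def, hPi_def, piProd]
          rw [hNi, Finset.prod_range_succ]
          ring
        rw [← h2]
        exact h1.congr' hEq
      rw [ContinuousAt, ← nhdsLT_sup_nhdsGE (ti i), Filter.tendsto_sup]
      exact ⟨hzL, hzR⟩
    · push_neg at hcase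
      have hxc : ContinuousAt x t := (hsol t ht hcase).continuousAt
      obtain ⟨lo, hi', hlo, hhi, hconst⟩ :=
        impCount_locally_const hti htiTop (fun j he => hcase j he.symm)
      have hPiE : ∀ᶠ s in 𝓝 t, z s = x s * Pi t * Real.exp (A s) := by
        filter_upwards [Ioo_mem_nhds hlo hhi] with s hs
        simp only [hz_def, hPi_def, piProd]
        rw [hconst s hs.1 hs.2]
      exact (continuousAt_congr hPiE).2
        ((hxc.mul continuousAt_const).mul (Real.continuous_exp.comp hAcont).continuousAt)
  -- z satisfies the differential inequality
  have hz'le : ∀ t, S ≤ t → t ∉ Set.range ti →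
      ∃ d, HasDerivAt z d t ∧ d ≤ -(P t * z (t - τ)) ∧ d ≤ 0 := by
    intro t hSt hnotimp
    have ht0 : 0 < t := lt_of_lt_of_le hS_pos hSt
    have hne : ∀ i, t ≠ ti i := fun i he => hnotimp ⟨i, he.symm⟩
    have hx' := hsol t ht0 hne
    obtain ⟨lo, hi', hlo, hhi, hconst⟩ :=
      impCount_locally_const hti htiTop (fun j he => hne j he.symm)
    have hzE : z =ᶠ[𝓝 t] fun s => x s * Pi t * Real.exp (A s) := by
      filter_upwards [Ioo_mem_nhds hlo hhi] with s hs
      simp only [hz_def, hPi_def, piProd]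
      rw [hconst s hs.1 hs.2]
    have hD1 : HasDerivAt (fun s => x s * Pi t * Real.exp (A s))
        ((-(a t * x t + b t * x (t - τ) + c t * x ((⌊t - 1⌋ : ℤ) : ℝ))) * Pi t * Real.exp (A t)
          + x t * Pi t * (Real.exp (A t) * a t)) t :=
      (hx'.mul_const (Pi t)).mul ((hA' t).exp)
    have hD2 := hD1.congr_of_eventuallyEq hzE
    have hexpc : Real.exp (A t - A (t - τ)) * Real.exp (A (t - τ)) = Real.exp (A t) := by
      rw [← Real.exp_add]; ring_nf
    have hPz : P t * z (t - τ) = b t * x (t - τ) * (Pi t * Real.exp (A t)) := by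
      have h0 : Pi (t - τ) ≠ 0 := (hPi_pos (t - τ)).ne'
      simp only [hz_def]
      rw [hPeq t, ← hexpc]
      field_simp
    refine ⟨_, hD2, ?_, ?_⟩
    · have hfl : T₀ < ((⌊t - 1⌋ : ℤ) : ℝ) := by
        have h3 : t - 1 - 1 < ((⌊t - 1⌋ : ℤ) : ℝ) := Int.sub_one_lt_floor (t - 1)
        simp only [hS_def] at hSt
        linarith
      have hcx : 0 ≤ c t * x ((⌊t - 1⌋ : ℤ) : ℝ) :=
        mul_nonneg (hcnn t) (hx _ hfl).le
      have hPiE := hPi_pos t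
      have hexpE := Real.exp_pos (A t)
      nlinarith [mul_nonneg hcx (mul_nonneg hPiE.le hexpE.le)]
    · have hfl : T₀ < ((⌊t - 1⌋ : ℤ) : ℝ) := by
        have h3 : t - 1 - 1 < ((⌊t - 1⌋ : ℤ) : ℝ) := Int.sub_one_lt_floor (t - 1)
        simp only [hS_def] at hSt
        linarith
      have hcx : 0 ≤ c t * x ((⌊t - 1⌋ : ℤ) : ℝ) :=
        mul_nonneg (hcnn t) (hx _ hfl).le
      have hbx : 0 ≤ b t * x (t - τ) := by
        refine mul_nonneg (hbnn t) (hx (t - τ) ?_).le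
        simp only [hS_def] at hSt; linarith
      have hPiE := hPi_pos t
      have hexpE := Real.exp_pos (A t)
      nlinarith [mul_nonneg (add_nonneg hbx hcx) (mul_nonneg hPiE.le hexpE.le)]
  -- z is antitone on [S,∞)
  have hzanti : ∀ u v, S ≤ u → u ≤ v → z v ≤ z u := by
    intro u v hu huv
    refine mcl huv (hfinD u v) (fun t ht => (hzcont t (lt_of_lt_of_le hS_pos
      (hu.trans ht.1))).continuousWithinAt) (fun t ht htD => ?_)
    obtain ⟨d, hd, _, hd0⟩ := hz'le t (hu.trans ht.1.le) (fun hmem => htD (Or.inl hmem))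
    exact ⟨d, hd, hd0⟩
  -- key integral estimate
  have hkey : ∀ u v K : ℝ, S + τ ≤ u → u ≤ v → (∀ s ∈ Icc u v, K ≤ z (s - τ)) →
      z v + K * ∫ s in u..v, P s ≤ z u := by
    intro u v K hu huv hK
    have h1 : (fun t => z t + K * ∫ s in u..t, P s) v ≤
        (fun t => z t + K * ∫ s in u..t, P s) u := by
      refine mcl (f := fun t => z t + K * ∫ s in u..t, P s) huv (hfinD u v) ?_ ?_
      · intro t htmem
        have ht0 : 0 < t := by have := htmem.1; simp only [hS_def] at hu; linarith
        exact ((hzcont t ht0).add ((hPprim_cont u).continuousAt.const_mul K)).continuousWithinAt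
      · intro t htmem htD
        obtain ⟨d, hd, hdle, _⟩ := hz'le t (by linarith [htmem.1])
          (fun hmem => htD (Or.inl hmem))
        refine ⟨d + K * P t, hd.add ((hPderiv u t htD).const_mul K), ?_⟩
        have h2 := hK t (Ioo_subset_Icc_self htmem)
        have h3 := hPnn t
        nlinarith [mul_le_mul_of_nonneg_right h2 h3]
    simp only at h1
    rw [intervalIntegral.integral_same] at h1
    linarith
  -- exponential estimate
  have hexp : ∀ u v m : ℝ, S + τ ≤ u → u ≤ v → (∀ s ∈ Icc u v, m * z s ≤ z (s - τ)) →
      z v * Real.exp (m * ∫ s in u..v, P s) ≤ z u := by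
    intro u v m hu huv hm
    have h1 : (fun t => z t * Real.exp (m * ∫ s in u..t, P s)) v ≤
        (fun t => z t * Real.exp (m * ∫ s in u..t, P s)) u := by
      refine mcl (f := fun t => z t * Real.exp (m * ∫ s in u..t, P s)) huv (hfinD u v) ?_ ?_
      · intro t htmem
        have ht0 : 0 < t := by have := htmem.1; simp only [hS_def] at hu; linarith
        exact ((hzcont t ht0).mul (Real.continuous_exp.continuousAt.comp
          ((hPprim_cont u).continuousAt.const_mul m))).continuousWithinAt
      · intro t htmem htD
        obtain ⟨d, hd, hdle, _⟩ := hz'le t (by linarith [htmem.1])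
          (fun hmem => htD (Or.inl hmem))
        refine ⟨_, hd.mul (((hPderiv u t htD).const_mul m).exp), ?_⟩
        have h2 := hm t (Ioo_subset_Icc_self htmem)
        have h3 := hPnn t
        have hE := Real.exp_pos (m * ∫ s in u..t, P s)
        have h4 : d + (m * z t) * P t ≤ 0 := by
          nlinarith [mul_le_mul_of_nonneg_right h2 h3]
        have h5 : d * Real.exp (m * ∫ s in u..t, P s)
            + z t * (Real.exp (m * ∫ s in u..t, P s) * (m * P t))
            = Real.exp (m * ∫ s in u..t, P s) * (d + (m * z t) * P t) := by ring
        rw [h5]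
        exact mul_nonpos_of_nonneg_of_nonpos hE.le h4
    simp only at h1
    rw [intervalIntegral.integral_same] at h1
    simp only [mul_zero, Real.exp_zero, mul_one] at h1
    exact h1
  -- the critical constant
  obtain ⟨cc, hcc_e, T₂, hT₂⟩ : ∃ cc, 1 / Real.exp 1 < cc ∧
      ∃ T₂, ∀ t, T₂ ≤ t → cc < ∫ s in (t - l)..t, P s := by
    set L := Filter.liminf (fun t => ∫ s in (t - l)..t, P s) Filter.atTop with hL_def
    have hcrit' : 1 / Real.exp 1 < L := hcrit
    refine ⟨(1 / Real.exp 1 + L) / 2, by linarith, ?_⟩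
    have hlt : (1 / Real.exp 1 + L) / 2 < L := by linarith
    have hbd : Filter.IsBoundedUnder (· ≥ ·) Filter.atTop
        (fun t => ∫ s in (t - l)..t, P s) :=
      ⟨0, Filter.eventually_map.2 (Filter.Eventually.of_forall fun t =>
        intervalIntegral.integral_nonneg (by linarith) fun s _ => hPnn s)⟩
    exact eventually_atTop.1 (Filter.eventually_lt_of_lt_liminf hlt hbd)
  have hcc_pos : 0 < cc := lt_trans (by positivity) hcc_e
  have hccτ : ∀ t, T₂ ≤ t → cc ≤ ∫ s in (t - τ)..t, P s := by
    intro t hT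
    have hsplit : ((∫ s in (t - τ)..(t - l), P s) + ∫ s in (t - l)..t, P s)
        = ∫ s in (t - τ)..t, P s :=
      integral_add_adjacent_intervals (hPint _ _) (hPint _ _)
    have h0 : 0 ≤ ∫ s in (t - τ)..(t - l), P s :=
      intervalIntegral.integral_nonneg (by linarith) fun s _ => hPnn s
    have := hT₂ t hT
    linarith
  -- ratio function
  set R : ℝ → ℝ := fun t => z (t - τ) / z t with hR_def
  have hE1 : ∀ t, S + τ ≤ t → 1 ≤ R t := by
    intro t ht
    have h1 : z t ≤ z (t - τ) := hzanti (t - τ) t (by linarith) (by linarith)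
    have h2 : 0 < z t := hzpos t (by simp only [hS_def] at ht ⊢; linarith [hτ])
    simp only [hR_def]
    exact (one_le_div h2).2 h1
  have hRbdd : Filter.IsBoundedUnder (· ≥ ·) Filter.atTop R :=
    ⟨1, Filter.eventually_map.2 (by
      filter_upwards [eventually_ge_atTop (S + τ)] with t ht using hE1 t ht)⟩
  -- frequent smallness of the ratio
  have hfreq : ∃ᶠ t in atTop, R t ≤ 4 / cc ^ 2 := by
    rw [Filter.frequently_atTop]
    intro M
    set t := max (M + l) (max T₂ (S + 2*τ + 2*l + 5)) with ht_def
    have htM : M + l ≤ t := le_max_left _ _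
    have htT₂ : T₂ ≤ t := le_trans (le_max_left _ _) (le_max_right _ _)
    have htS : S + 2*τ + 2*l + 5 ≤ t := le_trans (le_max_right _ _) (le_max_right _ _)
    have hT₀S : T₀ < S := by simp only [hS_def]; linarith
    -- the primitive
    have hφc : ContinuousOn (fun r => ∫ s in (t - l)..r, P s) (Icc (t - l) t) :=
      (hPprim_cont (t - l)).continuousOn
    have hφa : (∫ s in (t - l)..(t - l), P s) = 0 := intervalIntegral.integral_same
    have hφt : cc < ∫ s in (t - l)..t, P s := hT₂ t htT₂
    have hmem : cc / 2 ∈ Icc ((fun r => ∫ s in (t - l)..r, P s) (t - l))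
        ((fun r => ∫ s in (t - l)..r, P s) t) := by
      simp only [hφa]
      constructor
      · linarith
      · linarith
    obtain ⟨w, hw, hφw0⟩ := intermediate_value_Icc (by linarith : t - l ≤ t) hφc hmem
    have hφw : (∫ s in (t - l)..w, P s) = cc / 2 := hφw0
    have hwl : t - l ≤ w := hw.1
    have hwu : w ≤ t := hw.2
    have hI2 : cc / 2 ≤ ∫ s in w..t, P s := by
      have hsub := integral_interval_sub_left (hPint (t - l) t) (hPint (t - l) w)
      rw [hφw] at hsub
      linarith
    have hzt : 0 < z t := hzpos t (by linarith)
    have hzw : 0 < z w := hzpos w (by linarith)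
    have hztτ : 0 < z (t - τ) := hzpos (t - τ) (by linarith)
    have hzwτ : 0 < z (w - τ) := hzpos (w - τ) (by linarith)
    have hA1 : z t + z (t - τ) * ∫ s in w..t, P s ≤ z w :=
      hkey w t (z (t - τ)) (by linarith) hwu
        (fun s hs => hzanti (s - τ) (t - τ) (by linarith [hs.1]) (by linarith [hs.2]))
    have hB1 : (cc / 2) * z (t - τ) ≤ z w := by
      have h5 := mul_le_mul_of_nonneg_left hI2 hztτ.le
      have h6 : z (t - τ) * (cc / 2) = (cc / 2) * z (t - τ) := mul_comm _ _
      linarith [hA1, hzt]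
    have hA2 : z w + z (w - τ) * ∫ s in (t - l)..w, P s ≤ z (t - l) :=
      hkey (t - l) w (z (w - τ)) (by linarith) hwl
        (fun s hs => hzanti (s - τ) (w - τ) (by linarith [hs.1]) (by linarith [hs.2]))
    have hB2 : (cc / 2) * z (w - τ) ≤ z (t - l) := by
      rw [hφw] at hA2
      have h6 : z (w - τ) * (cc / 2) = (cc / 2) * z (w - τ) := mul_comm _ _
      linarith [hzw]
    have hC : z (t - l) ≤ z (t - τ) := hzanti (t - τ) (t - l) (by linarith) (by linarith)
    refine ⟨w, by linarith, ?_⟩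
    show z (w - τ) / z w ≤ 4 / cc ^ 2
    rw [div_le_div_iff₀ hzw (by positivity)]
    have h1 : (cc / 2) * ((cc / 2) * z (w - τ)) ≤ (cc / 2) * z (t - l) :=
      mul_le_mul_of_nonneg_left hB2 (by positivity)
    have h2 : (cc / 2) * z (t - l) ≤ (cc / 2) * z (t - τ) :=
      mul_le_mul_of_nonneg_left hC (by positivity)
    have h3 : (cc / 2) * ((cc / 2) * z (w - τ)) = z (w - τ) * cc ^ 2 / 4 := by ring
    linarith [hB1, h1, h2]
  set r := Filter.liminf R Filter.atTop with hr_def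
  have hr1 : 1 ≤ r :=
    Filter.le_liminf_of_le (Filter.IsCoboundedUnder.of_frequently_le hfreq)
      (by filter_upwards [eventually_ge_atTop (S + τ)] with t ht using hE1 t ht)
  have hrpos : 0 < r := lt_of_lt_of_le one_pos hr1
  -- final contradiction
  set δ := Real.exp (cc * r) - r with hδ_def
  have he1 := Real.exp_pos 1
  have hδpos : 0 < δ := by
    have h2 := Real.add_one_le_exp (cc * r - 1)
    rw [Real.exp_sub] at h2
    have h4 : cc * r * Real.exp 1 ≤ Real.exp (cc * r) := by
      have h5 := mul_le_mul_of_nonneg_right h2 he1.le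
      rw [div_mul_cancel₀ _ he1.ne'] at h5
      linarith
    have h3 : 1 < cc * Real.exp 1 := by
      rw [div_lt_iff₀ he1] at hcc_e
      linarith
    have h6 : 1 * r < (cc * Real.exp 1) * r := mul_lt_mul_of_pos_right h3 hrpos
    simp only [hδ_def]
    nlinarith [h4, h6]
  set ε := min (1/2 : ℝ) (δ / (cc * Real.exp (cc * r) + 1)) with hε_def
  have hεhalf : ε ≤ 1/2 := min_le_left _ _
  have hεpos : 0 < ε := lt_min (by norm_num) (by positivity)
  have hεle : ε ≤ δ / (cc * Real.exp (cc * r) + 1) := min_le_right _ _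
  obtain ⟨T₄, hT₄⟩ := eventually_atTop.1
    (Filter.eventually_lt_of_lt_liminf (show r - ε < r by linarith) hRbdd)
  have hm0 : 0 ≤ r - ε := by linarith
  have hlow : ∀ t, max (T₄ + τ) (max T₂ (S + 2*τ + 2)) ≤ t →
      Real.exp ((r - ε) * cc) ≤ R t := by
    intro t htt
    have ht1 : T₄ + τ ≤ t := le_trans (le_max_left _ _) htt
    have ht2 : T₂ ≤ t := le_trans (le_trans (le_max_left _ _) (le_max_right _ _)) htt
    have ht3 : S + 2*τ + 2 ≤ t := le_trans (le_trans (le_max_right _ _) (le_max_right _ _)) htt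
    have hT₀S : T₀ < S := by simp only [hS_def]; linarith
    have h2 : ∀ s ∈ Icc (t - τ) t, (r - ε) * z s ≤ z (s - τ) := by
      intro s hs
      have hRs : r - ε < R s := hT₄ s (by linarith [hs.1])
      have hzs : 0 < z s := hzpos s (by linarith [hs.1])
      have hRs' : r - ε < z (s - τ) / z s := hRs
      have := mul_le_mul_of_nonneg_right hRs'.le hzs.le
      rw [div_mul_cancel₀ _ hzs.ne'] at this
      linarith
    have h3 := hexp (t - τ) t (r - ε) (by linarith) (by linarith) h2
    have h4 : cc ≤ ∫ s in (t - τ)..t, P s := hccτ t ht2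
    have hzt : 0 < z t := hzpos t (by linarith)
    have h5 : Real.exp ((r - ε) * cc) ≤ Real.exp ((r - ε) * ∫ s in (t - τ)..t, P s) :=
      Real.exp_le_exp.2 (mul_le_mul_of_nonneg_left h4 hm0)
    show Real.exp ((r - ε) * cc) ≤ z (t - τ) / z t
    rw [le_div_iff₀ hzt]
    calc Real.exp ((r - ε) * cc) * z t
        ≤ Real.exp ((r - ε) * ∫ s in (t - τ)..t, P s) * z t :=
          mul_le_mul_of_nonneg_right h5 hzt.le
      _ ≤ z (t - τ) := by
          have := h3
          linarith [h3]
  have h6 : Real.exp ((r - ε) * cc) ≤ r :=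
    Filter.le_liminf_of_le (Filter.IsCoboundedUnder.of_frequently_le hfreq)
      (by filter_upwards [eventually_ge_atTop (max (T₄ + τ) (max T₂ (S + 2*τ + 2)))]
        with t ht using hlow t ht)
  have h7 : r < Real.exp ((r - ε) * cc) := by
    have hee : Real.exp ((r - ε) * cc) = Real.exp (cc * r) * Real.exp (-(ε * cc)) := by
      rw [← Real.exp_add]; ring_nf
    have h8 : 1 - ε * cc ≤ Real.exp (-(ε * cc)) := by
      have := Real.add_one_le_exp (-(ε * cc)); linarith
    have hE := Real.exp_pos (cc * r)
    have h9 : ε * (cc * Real.exp (cc * r)) < δ := by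
      have hpos2 : 0 < cc * Real.exp (cc * r) + 1 := by positivity
      have h10 : ε * (cc * Real.exp (cc * r)) ≤
          (δ / (cc * Real.exp (cc * r) + 1)) * (cc * Real.exp (cc * r)) :=
        mul_le_mul_of_nonneg_right hεle (by positivity)
      have h11 : (δ / (cc * Real.exp (cc * r) + 1)) * (cc * Real.exp (cc * r)) < δ := by
        rw [div_mul_eq_mul_div, div_lt_iff₀ hpos2]
        nlinarith [hδpos]
      linarith
    have h10 : Real.exp (cc * r) * (1 - ε * cc) ≤ Real.exp (cc * r) * Real.exp (-(ε * cc)) :=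
      mul_le_mul_of_nonneg_left h8 hE.le
    rw [hee]
    have h12 : Real.exp (cc * r) * (1 - ε * cc) = Real.exp (cc * r) - ε * (cc * Real.exp (cc * r)) := by
      ring
    have h13 : δ = Real.exp (cc * r) - r := hδ_def
    linarith
  linarith
end MAIN

/-- Theorem 3 (first condition): with `l = min{τ,1}`, if
`liminf_{t→∞} ∫_{t-l}^{t} (∏_{s-τ < t_j ≤ s}(1-b_j)) b(s) exp(∫_{s-τ}^{s} a) ds > 1/e`,
then every solution of `x'(t) + a(t)x(t) + b(t)x(t-τ) + c(t)x(⌊t-1⌋) = 0` (`t ≠ t_i`),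
`Δx(t_i) = b_i x(t_i)`, is oscillatory. -/
theorem oscillation_liminf_criterion
    (a b c : ℝ → ℝ) (ha : Continuous a) (hb : Continuous b) (hc : Continuous c)
    (hbnn : ∀ t, 0 ≤ b t) (hcnn : ∀ t, 0 ≤ c t)
    (τ : ℝ) (hτ : 0 < τ)
    (bi : ℕ → ℝ) (hbi : ∀ i, bi i < 1)
    (ti : ℕ → ℝ) (hti : StrictMono ti) (hti0 : 0 < ti 0)
    (htiTop : Tendsto ti atTop atTop)
    (hcrit : 1 / Real.exp 1 < Filter.liminf (fun t => ∫ s in (t - min τ 1)..t,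
      (∏ᶠ j ∈ {j : ℕ | s - τ < ti j ∧ ti j ≤ s}, (1 - bi j)) * b s *
        Real.exp (∫ u in (s - τ)..s, a u)) Filter.atTop)
    (x : ℝ → ℝ)
    (hsol : ∀ t, 0 < t → (∀ i, t ≠ ti i) →
      HasDerivAt x (-(a t * x t + b t * x (t - τ) + c t * x ((⌊t - 1⌋ : ℤ) : ℝ))) t)
    (hrc : ∀ i, ContinuousWithinAt x (Set.Ici (ti i)) (ti i))
    (himp : ∀ i, Tendsto x (nhdsWithin (ti i) (Set.Iio (ti i)))
      (nhds ((1 - bi i) * x (ti i)))) :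
    (¬ ∃ T, ∀ t, T < t → 0 < x t) ∧ (¬ ∃ T, ∀ t, T < t → x t < 0) := by
  constructor
  · rintro ⟨T, hT⟩
    exact no_eventually_pos a b c ha hb hc hbnn hcnn τ hτ bi hbi ti hti hti0 htiTop hcrit
      x hsol hrc himp T hT
  · rintro ⟨T, hT⟩
    refine no_eventually_pos a b c ha hb hc hbnn hcnn τ hτ bi hbi ti hti hti0 htiTop hcrit
      (fun t => -x t) ?_ ?_ ?_ T (fun t ht => neg_pos.2 (hT t ht))
    · intro t ht hi
      have h1 : HasDerivAt (fun s => -x s) _ t := (hsol t ht hi).neg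
      convert h1 using 1
      ring
    · exact fun i => (hrc i).neg
    · intro i
      have h1 := (himp i).neg
      convert h1 using 2
      ring
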